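/- arXiv:2010.09265 — 3 statements merged into one kernel-verified Lean document; each statement's English description precedes it below -/
import Mathlib

section
/- Under the model y = Σ_{i=1}^k z_i f_i(⟨β_i*, x⟩) + ε with x ~ N(0, Σ), Σ positive definite, z_i i.i.d. mean-zero unit-variance independent of x, ε mean zero independent of everything, and assuming E[f_j'(⟨x, β_j*⟩)] ≠ 0, each parameter satisfies β_j* = c_j Σ^{-1} E[z_j y x] where c_j = 1 / E[f_j'(⟨x, β_j*⟩)]. -/
open MeasureTheory ProbabilityTheory Matrix Real Filter Set
open scoped NNReal ENNReal

noncomputable section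

lemma gauss_pdf_eq (x : ℝ) : gaussianPDFReal 0 1 x = (√(2*π))⁻¹ * rexp (-x^2/2) := by
  simp [gaussianPDFReal]

lemma integral_gaussianReal_eq (g : ℝ → ℝ) :
    ∫ t, g t ∂(gaussianReal 0 1) = ∫ t, gaussianPDFReal 0 1 t * g t := by
  rw [gaussianReal_of_var_ne_zero 0 one_ne_zero]
  have : (gaussianPDF 0 1) = fun x => ((Real.toNNReal (gaussianPDFReal 0 1 x) : ℝ≥0) : ℝ≥0∞) := rfl
  rw [this, integral_withDensity_eq_integral_smul
    ((measurable_gaussianPDFReal 0 1).real_toNNReal)]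
  congr 1; ext t
  simp [NNReal.smul_def, Real.coe_toNNReal _ (gaussianPDFReal_nonneg 0 1 t)]

lemma integrable_gaussianReal_iff (g : ℝ → ℝ) :
    Integrable g (gaussianReal 0 1) ↔
      Integrable (fun t => g t * gaussianPDFReal 0 1 t) volume := by
  rw [gaussianReal_of_var_ne_zero 0 one_ne_zero, gaussianPDF_def,
    integrable_withDensity_iff (measurable_gaussianPDFReal 0 1).ennreal_ofReal
      (ae_of_all _ fun _ => ENNReal.ofReal_lt_top)]
  simp_rw [ENNReal.toReal_ofReal (gaussianPDFReal_nonneg 0 1 _)]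
noncomputable section

lemma abs_le_poly_of_deriv_bound {f : ℝ → ℝ} (hf : Differentiable ℝ f) {L : ℝ}
    (hbd : ∀ t, |deriv f t| ≤ L) (t : ℝ) : |f t| ≤ |f 0| + L * |t| := by
  have h := Convex.norm_image_sub_le_of_norm_deriv_le (fun x _ => hf x)
    (fun x _ => by rw [Real.norm_eq_abs]; exact hbd x) convex_univ (mem_univ 0) (mem_univ t)
  simp only [Real.norm_eq_abs, sub_zero] at h
  calc |f t| = |f 0 + (f t - f 0)| := by ring_nf
    _ ≤ |f 0| + |f t - f 0| := abs_add_le _ _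
    _ ≤ |f 0| + L * |t| := by linarith

lemma hasDerivAt_gaussFun (t : ℝ) :
    HasDerivAt (fun s : ℝ => rexp (-s^2/2)) (-t * rexp (-t^2/2)) t := by
  have h1 : HasDerivAt (fun s : ℝ => -s^2/2) (-t) t := by
    have := ((hasDerivAt_pow 2 t).neg.div_const 2)
    exact this.congr_deriv (by norm_num; ring)
  simpa [mul_comm] using h1.exp

lemma integrable_gaussFun : Integrable (fun t : ℝ => rexp (-t^2/2)) := by
  have := integrable_exp_neg_mul_sq (b := (2:ℝ)⁻¹) (by norm_num)
  convert this using 2 with t; ring_nf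

lemma integrable_abs_gaussFun : Integrable (fun t : ℝ => |t| * rexp (-t^2/2)) := by
  have := (integrable_mul_exp_neg_mul_sq (b := (2:ℝ)⁻¹) (by norm_num)).abs
  convert this using 2 with t
  rw [abs_mul, abs_of_pos (exp_pos _)]
  congr 2; ring
  
lemma integrable_sq_gaussFun : Integrable (fun t : ℝ => t^2 * rexp (-t^2/2)) := by
  have := integrable_rpow_mul_exp_neg_mul_sq (b := (2:ℝ)⁻¹) (by norm_num) (s := 2) (by norm_num)
  convert this using 2 with t
  rw [show ((2:ℝ) = ((2:ℕ):ℝ)) by norm_num, Real.rpow_natCast]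
  congr 2; ring

lemma stein_one_dim {f : ℝ → ℝ} (hf : Differentiable ℝ f) {L : ℝ}
    (hbd : ∀ t, |deriv f t| ≤ L) :
    ∫ t, t * f t ∂(gaussianReal 0 1) = ∫ t, deriv f t ∂(gaussianReal 0 1) := by
  have hL0 : 0 ≤ L := le_trans (abs_nonneg _) (hbd 0)
  set ψ : ℝ → ℝ := fun s => rexp (-s^2/2) with hψ
  have hψpos : ∀ s, 0 < ψ s := fun s => exp_pos _
  have hmf : AEStronglyMeasurable f volume := hf.continuous.aestronglyMeasurable
  have hmd : AEStronglyMeasurable (deriv f) volume :=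
    (measurable_deriv f).aestronglyMeasurable
  have hmψ : Continuous ψ := by continuity
  have hpoly := abs_le_poly_of_deriv_bound hf hbd
  -- Integrabilities
  have huv' : Integrable (f * fun t => -t * ψ t) volume := by
    apply Integrable.mono' (((integrable_abs_gaussFun.const_mul |f 0|).add
      (integrable_sq_gaussFun.const_mul L)))
    · exact (hmf.mul ((continuous_id.neg.mul hmψ).aestronglyMeasurable))
    · refine ae_of_all _ fun t => ?_
      simp only [Pi.mul_apply, Real.norm_eq_abs, abs_mul, abs_neg,
        abs_of_pos (hψpos t)]
      calc |f t| * (|t| * ψ t) ≤ (|f 0| + L * |t|) * (|t| * ψ t) := by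
            apply mul_le_mul_of_nonneg_right (hpoly t)
            positivity
        _ = |f 0| * (|t| * ψ t) + L * (|t| * |t| * ψ t) := by ring
        _ ≤ |f 0| * (|t| * ψ t) + L * (t^2 * ψ t) := by
            have : |t| * |t| = t ^ 2 := by rw [abs_mul_abs_self]; ring
            rw [this]
  have hu'v : Integrable (deriv f * ψ) volume := by
    apply Integrable.mono' (integrable_gaussFun.const_mul L)
    · exact hmd.mul hmψ.aestronglyMeasurable
    · refine ae_of_all _ fun t => ?_
      simp only [Pi.mul_apply, Real.norm_eq_abs, abs_mul, abs_of_pos (hψpos t)]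
      exact mul_le_mul_of_nonneg_right (hbd t) (hψpos t).le
  have huv : Integrable (f * ψ) volume := by
    apply Integrable.mono' ((integrable_gaussFun.const_mul |f 0|).add
      (integrable_abs_gaussFun.const_mul L))
    · exact hmf.mul hmψ.aestronglyMeasurable
    · refine ae_of_all _ fun t => ?_
      simp only [Pi.mul_apply, Real.norm_eq_abs, abs_mul, abs_of_pos (hψpos t)]
      calc |f t| * ψ t ≤ (|f 0| + L * |t|) * ψ t :=
            mul_le_mul_of_nonneg_right (hpoly t) (hψpos t).le
        _ = |f 0| * ψ t + L * (|t| * ψ t) := by ring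
  have key := integral_mul_deriv_eq_deriv_mul_of_integrable
    (u := f) (v := ψ) (u' := deriv f) (v' := fun t => -t * ψ t)
    (fun t _ => (hf t).hasDerivAt) (fun t _ => hasDerivAt_gaussFun t) huv' hu'v huv
  have key2 : ∫ t, ψ t * (t * f t) = ∫ t, ψ t * deriv f t := by
    have e1 : ∫ t, f t * (-t * ψ t) = -∫ t, ψ t * (t * f t) := by
      rw [← integral_neg]; congr 1; ext t; ring
    have e2 : ∫ t, deriv f t * ψ t = ∫ t, ψ t * deriv f t := by
      congr 1; ext t; ring
    rw [e1, e2] at key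
    linarith
  rw [integral_gaussianReal_eq, integral_gaussianReal_eq]
  simp_rw [gauss_pdf_eq, mul_assoc]
  rw [MeasureTheory.integral_const_mul, MeasureTheory.integral_const_mul, key2]

end

section Affine
noncomputable section

lemma hasDerivAt_affine_comp {f : ℝ → ℝ} (hf : Differentiable ℝ f) (a r t : ℝ) :
    HasDerivAt (fun s => f (a * s + r)) (a * deriv f (a * t + r)) t := by
  have h1 : HasDerivAt (fun s : ℝ => a * s + r) a t := by
    simpa using ((hasDerivAt_id t).const_mul a).add_const r
  have h2 := (hf (a * t + r)).hasDerivAt.comp t h1; rw [mul_comm] at h2; exact h2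

lemma stein_affine {f : ℝ → ℝ} (hf : Differentiable ℝ f) {L : ℝ}
    (hbd : ∀ t, |deriv f t| ≤ L) (a r : ℝ) :
    ∫ t, t * f (a * t + r) ∂(gaussianReal 0 1)
      = a * ∫ t, deriv f (a * t + r) ∂(gaussianReal 0 1) := by
  set g : ℝ → ℝ := fun s => f (a * s + r) with hg
  have hgd : ∀ t, HasDerivAt g (a * deriv f (a * t + r)) t :=
    fun t => hasDerivAt_affine_comp hf a r t
  have hgdiff : Differentiable ℝ g := fun t => (hgd t).differentiableAt
  have hgderiv : ∀ t, deriv g t = a * deriv f (a * t + r) := fun t => (hgd t).deriv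
  have hgbd : ∀ t, |deriv g t| ≤ |a| * L := by
    intro t; rw [hgderiv t, abs_mul]
    exact mul_le_mul_of_nonneg_left (hbd _) (abs_nonneg a)
  have := stein_one_dim hgdiff hgbd
  rw [this]
  simp_rw [hgderiv]
  rw [MeasureTheory.integral_const_mul]

/-- Integrability against the standard Gaussian for functions of quadratic growth. -/
lemma integrable_gaussianReal_poly {g : ℝ → ℝ}
    (hm : AEStronglyMeasurable g (gaussianReal 0 1)) {C₀ C₁ C₂ : ℝ}
    (h : ∀ t, |g t| ≤ C₀ + C₁ * |t| + C₂ * t ^ 2) :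
    Integrable g (gaussianReal 0 1) := by
  have habs : Integrable (fun t => |t|) (gaussianReal 0 1) := by
    rw [integrable_gaussianReal_iff]
    have : Integrable (fun t => (√(2*π))⁻¹ * (|t| * rexp (-t^2/2))) volume :=
      integrable_abs_gaussFun.const_mul _
    apply this.congr
    refine ae_of_all _ fun t => ?_
    simp only [gauss_pdf_eq]; ring
  have hsq : Integrable (fun t => t ^ 2) (gaussianReal 0 1) := by
    rw [integrable_gaussianReal_iff]
    have : Integrable (fun t => (√(2*π))⁻¹ * (t^2 * rexp (-t^2/2))) volume :=
      integrable_sq_gaussFun.const_mul _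
    apply this.congr
    refine ae_of_all _ fun t => ?_
    simp only [gauss_pdf_eq]; ring
  apply Integrable.mono' (((integrable_const C₀).add (habs.const_mul C₁)).add
    (hsq.const_mul C₂)) hm
  refine ae_of_all _ fun t => ?_
  simpa [Real.norm_eq_abs] using h t

end
end Affine

section Pi
noncomputable section

lemma map_eval_gaussPi {p : ℕ} (i : Fin p) :
    Measure.map (Function.eval i) (Measure.pi fun _ : Fin p => gaussianReal 0 1)
      = gaussianReal 0 1 := by
  ext s hs
  rw [Measure.map_apply (measurable_pi_apply i) hs, Set.eval_preimage, Measure.pi_pi]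
  rw [Finset.prod_eq_single i (fun b _ hb => by rw [Function.update_of_ne hb]; simp)
    (fun h => absurd (Finset.mem_univ i) h)]
  rw [Function.update_self]

lemma pi_coord_integrable {p : ℕ} (i : Fin p) {g : ℝ → ℝ} (hg : Measurable g)
    (hint : Integrable g (gaussianReal 0 1)) :
    Integrable (fun v : Fin p → ℝ => g (v i))
      (Measure.pi fun _ : Fin p => gaussianReal 0 1) := by
  have := (integrable_map_measure (μ := Measure.pi fun _ : Fin p => gaussianReal 0 1)
    (f := Function.eval i) (g := g)
    (by rw [map_eval_gaussPi]; exact hg.aestronglyMeasurable)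
    (measurable_pi_apply i).aemeasurable).mp
  rw [map_eval_gaussPi] at this
  exact this hint

lemma abs_mul_abs_le_half_sq (x y : ℝ) : |x| * |y| ≤ (x ^ 2 + y ^ 2) / 2 := by
  nlinarith [sq_nonneg (|x| - |y|), sq_abs x, sq_abs y]

lemma measurable_dotProduct {p : ℕ} (a : Fin p → ℝ) :
    Measurable (fun v : Fin p → ℝ => a ⬝ᵥ v) := by
  unfold dotProduct
  exact Finset.measurable_sum _ fun i _ => (measurable_pi_apply (X := fun _ : Fin p => ℝ) i).const_mul (a i)

lemma integrable_pi_coord_mul {p : ℕ} (a : Fin p → ℝ) (m : Fin p) {f : ℝ → ℝ}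
    (hc : Continuous f) {c0 c1 : ℝ} (hc1 : 0 ≤ c1) (hgrow : ∀ s, |f s| ≤ c0 + c1 * |s|) :
    Integrable (fun v : Fin p → ℝ => v m * f (a ⬝ᵥ v))
      (Measure.pi fun _ : Fin p => gaussianReal 0 1) := by
  set μp := Measure.pi fun _ : Fin p => gaussianReal 0 1
  have habs : Integrable (fun v : Fin p → ℝ => |v m|) μp :=
    pi_coord_integrable m (measurable_abs)
      (integrable_gaussianReal_poly (measurable_abs.aestronglyMeasurable)
        (C₀ := 0) (C₁ := 1) (C₂ := 0) (fun t => by simp [abs_abs]))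
  have hsq : ∀ i : Fin p, Integrable (fun v : Fin p → ℝ => (v i) ^ 2) μp := fun i =>
    pi_coord_integrable i (measurable_id.pow_const 2)
      (integrable_gaussianReal_poly ((measurable_id.pow_const 2).aestronglyMeasurable)
        (C₀ := 0) (C₁ := 0) (C₂ := 1) (fun t => by simp [abs_of_nonneg (sq_nonneg t)]))
  apply Integrable.mono' ((habs.const_mul c0).add
    ((MeasureTheory.integrable_finset_sum Finset.univ (fun i _ =>
      (((hsq m).add (hsq i)).div_const 2).const_mul (c1 * |a i|)))))
  · exact ((measurable_pi_apply m).mul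
      (hc.measurable.comp (measurable_dotProduct a))).aestronglyMeasurable
  · refine ae_of_all _ fun v => ?_
    rw [Real.norm_eq_abs, abs_mul]
    calc |v m| * |f (a ⬝ᵥ v)| ≤ |v m| * (c0 + c1 * |a ⬝ᵥ v|) :=
          mul_le_mul_of_nonneg_left (hgrow _) (abs_nonneg _)
      _ ≤ |v m| * c0 + c1 * ∑ i, |a i| * (|v m| * |v i|) := by
          rw [mul_add]
          refine add_le_add (le_of_eq rfl) ?_
          have : |a ⬝ᵥ v| ≤ ∑ i, |a i| * |v i| := by
            refine (Finset.abs_sum_le_sum_abs _ _).trans ?_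
            exact le_of_eq (Finset.sum_congr rfl fun i _ => abs_mul _ _)
          calc |v m| * (c1 * |a ⬝ᵥ v|) ≤ |v m| * (c1 * ∑ i, |a i| * |v i|) := by
                refine mul_le_mul_of_nonneg_left ?_ (abs_nonneg _)
                exact mul_le_mul_of_nonneg_left this hc1
            _ = c1 * ∑ i, |a i| * (|v m| * |v i|) := by
                simp only [Finset.mul_sum]
                apply Finset.sum_congr rfl
                intro i _
                ring
      _ ≤ c0 * |v m| + c1 * ∑ i, |a i| * (((v m) ^ 2 + (v i) ^ 2) / 2) := by
          refine add_le_add (le_of_eq (mul_comm _ _)) ?_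
          refine mul_le_mul_of_nonneg_left (Finset.sum_le_sum fun i _ => ?_) hc1
          exact mul_le_mul_of_nonneg_left (abs_mul_abs_le_half_sq _ _) (abs_nonneg _)
      _ ≤ c0 * |v m| + ∑ i, c1 * |a i| * (((v m) ^ 2 + (v i) ^ 2) / 2) := by
          rw [Finset.mul_sum]
          refine add_le_add (le_refl _) (le_of_eq (Finset.sum_congr rfl fun i _ => by ring))

lemma integrable_pi_bounded {p : ℕ} {g : (Fin p → ℝ) → ℝ}
    (hm : AEStronglyMeasurable g (Measure.pi fun _ : Fin p => gaussianReal 0 1))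
    {L : ℝ} (hg : ∀ v, |g v| ≤ L) :
    Integrable g (Measure.pi fun _ : Fin p => gaussianReal 0 1) := by
  apply Integrable.mono' (integrable_const L) hm
  exact ae_of_all _ fun v => by simpa [Real.norm_eq_abs] using hg v

end
end Pi

section SteinPi
noncomputable section

lemma stein_pi {p : ℕ} (a : Fin p → ℝ) (m : Fin p) {f : ℝ → ℝ}
    (hf : Differentiable ℝ f) {L : ℝ} (hbd : ∀ t, |deriv f t| ≤ L) :
    ∫ v, v m * f (a ⬝ᵥ v) ∂(Measure.pi fun _ : Fin p => gaussianReal 0 1)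
      = a m * ∫ v, deriv f (a ⬝ᵥ v) ∂(Measure.pi fun _ : Fin p => gaussianReal 0 1) := by
  obtain ⟨n, rfl⟩ : ∃ n, p = n + 1 := ⟨p - 1, by have := m.pos; omega⟩
  have hL0 : 0 ≤ L := le_trans (abs_nonneg _) (hbd 0)
  set γ := gaussianReal 0 1 with hγ
  set μn := Measure.pi fun _ : Fin n => γ with hμn
  set μp := Measure.pi fun _ : Fin (n+1) => γ with hμp
  set e := MeasurableEquiv.piFinSuccAbove (fun _ : Fin (n+1) => ℝ) m with he
  have hmp : MeasurePreserving e.symm (γ.prod μn) μp :=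
    (measurePreserving_piFinSuccAbove (fun _ : Fin (n+1) => γ) m).symm
  set b : Fin n → ℝ := fun i => a (m.succAbove i) with hb
  have hsymm : ∀ q : ℝ × (Fin n → ℝ), e.symm q = m.insertNth q.1 q.2 := by
    intro q
    simp [he, MeasurableEquiv.piFinSuccAbove_symm_apply, Fin.insertNthEquiv]
  have hdot : ∀ (t : ℝ) (w : Fin n → ℝ), a ⬝ᵥ m.insertNth t w = a m * t + b ⬝ᵥ w := by
    intro t w
    have h1 : a ⬝ᵥ m.insertNth t w
        = ∑ i, a i * (m.insertNth (α := fun _ => ℝ) t w) i := rfl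
    rw [h1, Fin.sum_univ_succAbove (fun i => a i * (m.insertNth (α := fun _ => ℝ) t w) i) m]
    simp only [Fin.insertNth_apply_same, Fin.insertNth_apply_succAbove]
    rfl
  have hgrow := abs_le_poly_of_deriv_bound hf hbd
  have hI1 : Integrable (fun v : Fin (n+1) → ℝ => v m * f (a ⬝ᵥ v)) μp :=
    integrable_pi_coord_mul a m hf.continuous hL0 hgrow
  have hmd : Measurable fun v : Fin (n+1) → ℝ => deriv f (a ⬝ᵥ v) :=
    (measurable_deriv f).comp (measurable_dotProduct a)
  have hI2 : Integrable (fun v : Fin (n+1) → ℝ => deriv f (a ⬝ᵥ v)) μp :=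
    integrable_pi_bounded hmd.aestronglyMeasurable (fun v => hbd _)
  have hI1' : Integrable (fun q : ℝ × (Fin n → ℝ) => q.1 * f (a m * q.1 + b ⬝ᵥ q.2))
      (γ.prod μn) := by
    have := (hmp.integrable_comp_emb e.symm.measurableEmbedding).mpr hI1
    apply this.congr
    refine ae_of_all _ fun q => ?_
    simp only [Function.comp_apply, hsymm q, Fin.insertNth_apply_same, hdot]
  have hI2' : Integrable (fun q : ℝ × (Fin n → ℝ) => deriv f (a m * q.1 + b ⬝ᵥ q.2))
      (γ.prod μn) := by
    have := (hmp.integrable_comp_emb e.symm.measurableEmbedding).mpr hI2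
    apply this.congr
    refine ae_of_all _ fun q => ?_
    simp only [Function.comp_apply, hsymm q, hdot]
  have e1 : ∫ v, v m * f (a ⬝ᵥ v) ∂μp
      = ∫ q : ℝ × (Fin n → ℝ), q.1 * f (a m * q.1 + b ⬝ᵥ q.2) ∂(γ.prod μn) := by
    rw [← hmp.integral_comp e.symm.measurableEmbedding]
    congr 1; ext q
    simp only [hsymm q, Fin.insertNth_apply_same, hdot]
  have e2 : ∫ v, deriv f (a ⬝ᵥ v) ∂μp
      = ∫ q : ℝ × (Fin n → ℝ), deriv f (a m * q.1 + b ⬝ᵥ q.2) ∂(γ.prod μn) := by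
    rw [← hmp.integral_comp e.symm.measurableEmbedding]
    congr 1; ext q
    simp only [hsymm q, hdot]
  rw [e1, e2, MeasureTheory.integral_prod_symm _ hI1',
    MeasureTheory.integral_prod_symm _ hI2']
  rw [← MeasureTheory.integral_const_mul]
  congr 1; ext w
  exact stein_affine hf hbd (a m) (b ⬝ᵥ w)

end
end SteinPi

/-- Theorem 1 of the paper: in the model with Gaussian x, each
`β_j* = c_j • S⁻¹ E[z_j y x]` where `c_j = 1 / E[f_j'(⟨x, β_j*⟩)]`. -/
theorem scaled_least_squares_structure
    {p k : ℕ} {Ω : Type*} [MeasurableSpace Ω] (P : Measure Ω) [IsProbabilityMeasure P]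
    (x : Ω → (Fin p → ℝ)) (z : Fin k → Ω → ℝ) (ε y : Ω → ℝ)
    (S A : Matrix (Fin p) (Fin p) ℝ) (hS : S.PosDef) (hA : A * Aᵀ = S)
    (hlaw : Measure.map x P =
      Measure.map (fun v => A.mulVec v) (Measure.pi fun _ : Fin p => gaussianReal 0 1))
    (f : Fin k → ℝ → ℝ) (hf : ∀ i, Differentiable ℝ (f i))
    (L : ℝ) (hbd : ∀ i t, |deriv (f i) t| ≤ L)
    (G : ℝ) (hlip : ∀ i s t, |deriv (f i) s - deriv (f i) t| ≤ G * |s - t|)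
    (βs : Fin k → Fin p → ℝ)
    (hx : Measurable x) (hz : ∀ i, Measurable (z i)) (hε : Measurable ε)
    (hiid : iIndepFun z P)
    (hident : ∀ i j, Measure.map (z i) P = Measure.map (z j) P)
    (hzmean : ∀ i, ∫ ω, z i ω ∂P = 0)
    (hzvar : ∀ i, ∫ ω, (z i ω) ^ 2 ∂P = 1)
    (hzx : IndepFun (fun ω => fun i => z i ω) x P)
    (hεind : IndepFun ε (fun ω => ((fun i => z i ω), x ω)) P)
    (hεmean : ∫ ω, ε ω ∂P = 0)
    (hy : ∀ ω, y ω = ∑ i, z i ω * f i (βs i ⬝ᵥ x ω) + ε ω)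
    (j : Fin k)
    (hint1 : Integrable (fun ω => (z j ω * y ω) • x ω) P)
    (hint3 : ∀ i i' : Fin k,
      Integrable (fun ω => (z i ω * z i' ω) • (f i' (βs i' ⬝ᵥ x ω) • x ω)) P)
    (hint4 : Integrable (fun ω => (z j ω * ε ω) • x ω) P)
    (hne : ∫ ω, deriv (f j) (βs j ⬝ᵥ x ω) ∂P ≠ 0) :
    βs j = (∫ ω, deriv (f j) (βs j ⬝ᵥ x ω) ∂P)⁻¹ •
      S⁻¹.mulVec (∫ ω, (z j ω * y ω) • x ω ∂P) := by
  classical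
  set γ := gaussianReal 0 1 with hγdef
  set μp := (Measure.pi fun _ : Fin p => gaussianReal 0 1) with hμpdef
  set a : Fin p → ℝ := Aᵀ.mulVec (βs j) with hadef
  set c : ℝ := ∫ ω, deriv (f j) (βs j ⬝ᵥ x ω) ∂P with hcdef
  have hL0 : 0 ≤ L := le_trans (abs_nonneg _) (hbd j 0)
  have hgrow := abs_le_poly_of_deriv_bound (hf j) (hbd j)
  have hAm : Measurable (fun v : Fin p → ℝ => A.mulVec v) :=
    measurable_pi_lambda _ fun m => measurable_dotProduct (A m)
  -- transfer of integrals from Ω to the standard Gaussian product space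
  have htrans : ∀ g : (Fin p → ℝ) → ℝ, Measurable g →
      ∫ ω, g (x ω) ∂P = ∫ v, g (A.mulVec v) ∂μp := by
    intro g hg
    rw [← integral_map hx.aemeasurable (hg.aestronglyMeasurable), hlaw,
      integral_map hAm.aemeasurable (hg.aestronglyMeasurable)]
  -- the dot-product changes of variables
  have hdotAv : ∀ v : Fin p → ℝ, βs j ⬝ᵥ A.mulVec v = a ⬝ᵥ v := by
    intro v
    rw [Matrix.dotProduct_mulVec, hadef, Matrix.mulVec_transpose]
  -- c expressed on Gaussian space
  set I : ℝ := ∫ v, deriv (f j) (a ⬝ᵥ v) ∂μp with hIdef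
  have hcI : c = I := by
    rw [hcdef, htrans (fun v => deriv (f j) (βs j ⬝ᵥ v))
      ((measurable_deriv (f j)).comp (measurable_dotProduct (βs j)))]
    simp_rw [hdotAv]
    rfl
  -- the Gaussian-space main computation
  have hM : ∀ m : Fin p, (∫ ω, f j (βs j ⬝ᵥ x ω) * x ω m ∂P) = (S.mulVec (βs j)) m * c := by
    intro m
    have hgm : Measurable (fun v : Fin p → ℝ => f j (βs j ⬝ᵥ v) * v m) :=
      ((hf j).continuous.measurable.comp (measurable_dotProduct (βs j))).mul
        (measurable_pi_apply m)
    rw [htrans _ hgm]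
    have h1 : (fun v : Fin p → ℝ => f j (βs j ⬝ᵥ A.mulVec v) * (A.mulVec v) m)
        = fun v => ∑ i, A m i * (v i * f j (a ⬝ᵥ v)) := by
      ext v
      rw [hdotAv v]
      have : (A.mulVec v) m = ∑ i, A m i * v i := rfl
      rw [this, Finset.mul_sum]
      apply Finset.sum_congr rfl
      intro i _
      ring
    rw [h1, MeasureTheory.integral_finset_sum _ (fun i _ =>
      (integrable_pi_coord_mul a i (hf j).continuous hL0 hgrow).const_mul (A m i))]
    have h2 : ∀ i : Fin p, ∫ v, A m i * (v i * f j (a ⬝ᵥ v)) ∂μp = A m i * (a i * I) := by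
      intro i
      rw [MeasureTheory.integral_const_mul, stein_pi a i (hf j) (hbd j)]
    rw [Finset.sum_congr rfl fun i _ => h2 i]
    have h3 : ∑ i, A m i * (a i * I) = (∑ i, A m i * a i) * I := by
      rw [Finset.sum_mul]
      exact Finset.sum_congr rfl fun i _ => by ring
    rw [h3, hcI]
    congr 1
    have : (∑ i, A m i * a i) = (A.mulVec a) m := rfl
    rw [this, hadef, Matrix.mulVec_mulVec, hA]
  -- componentwise evaluation of the vector integral
  have hw : ∀ m : Fin p, (∫ ω, (z j ω * y ω) • x ω ∂P) m
      = ∫ ω, (z j ω * y ω) * x ω m ∂P := by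
    intro m
    have := (ContinuousLinearMap.proj (R := ℝ) (φ := fun _ : Fin p => ℝ) m).integral_comp_comm
      hint1
    simp only [ContinuousLinearMap.proj_apply, Pi.smul_apply, smul_eq_mul] at this
    exact this.symm
  -- componentwise computation
  have hcomp : ∀ m : Fin p, ∫ ω, (z j ω * y ω) * x ω m ∂P = c * (S.mulVec (βs j)) m := by
    intro m
    have hproj := fun (i i' : Fin k) => (ContinuousLinearMap.proj (R := ℝ)
      (φ := fun _ : Fin p => ℝ) m).integrable_comp (hint3 i i')
    have hintc : ∀ i i' : Fin k,
        Integrable (fun ω => (z i ω * z i' ω) * (f i' (βs i' ⬝ᵥ x ω) * x ω m)) P := by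
      intro i i'
      apply (hproj i i').congr
      refine ae_of_all _ fun ω => ?_
      simp only [ContinuousLinearMap.proj_apply, Pi.smul_apply, smul_eq_mul]
    have hintε : Integrable (fun ω => (z j ω * ε ω) * x ω m) P := by
      have := (ContinuousLinearMap.proj (R := ℝ)
        (φ := fun _ : Fin p => ℝ) m).integrable_comp hint4
      apply this.congr
      refine ae_of_all _ fun ω => ?_
      simp only [ContinuousLinearMap.proj_apply, Pi.smul_apply, smul_eq_mul]
    have hexp : (fun ω => (z j ω * y ω) * x ω m)
        = fun ω => (∑ i, (z j ω * z i ω) * (f i (βs i ⬝ᵥ x ω) * x ω m))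
            + (z j ω * ε ω) * x ω m := by
      ext ω
      rw [hy ω, mul_add, add_mul, Finset.mul_sum, Finset.sum_mul]
      congr 1
      apply Finset.sum_congr rfl
      intro i _
      ring
    rw [hexp, MeasureTheory.integral_add
      (MeasureTheory.integrable_finset_sum _ fun i _ => hintc j i) hintε,
      MeasureTheory.integral_finset_sum _ fun i _ => hintc j i]
    -- the ε term vanishes
    have hεterm : ∫ ω, (z j ω * ε ω) * x ω m ∂P = 0 := by
      have hind : IndepFun ε (fun ω => z j ω * x ω m) P := by
        have hmq : Measurable (fun q : (Fin k → ℝ) × (Fin p → ℝ) => q.1 j * q.2 m) :=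
          ((measurable_pi_apply j).comp measurable_fst).mul
            ((measurable_pi_apply m).comp measurable_snd)
        exact hεind.comp measurable_id hmq
      have := hind.integral_fun_mul_eq_mul_integral (hε.aestronglyMeasurable)
        (((hz j).mul ((measurable_pi_apply m).comp hx)).aestronglyMeasurable)
      have heq : ∫ ω, (z j ω * ε ω) * x ω m ∂P = ∫ ω, ε ω * (z j ω * x ω m) ∂P := by
        congr 1; ext ω; ring
      rw [heq, this, hεmean, zero_mul]
    -- the cross terms
    have hterm : ∀ i : Fin k,
        ∫ ω, (z j ω * z i ω) * (f i (βs i ⬝ᵥ x ω) * x ω m) ∂P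
          = (∫ ω, z j ω * z i ω ∂P) * ∫ ω, f i (βs i ⬝ᵥ x ω) * x ω m ∂P := by
      intro i
      have hg1 : Measurable (fun u : Fin k → ℝ => u j * u i) :=
        (measurable_pi_apply j).mul (measurable_pi_apply i)
      have hg2 : Measurable (fun v : Fin p → ℝ => f i (βs i ⬝ᵥ v) * v m) :=
        ((hf i).continuous.measurable.comp (measurable_dotProduct (βs i))).mul
          (measurable_pi_apply m)
      have hind : IndepFun (fun ω => z j ω * z i ω)
          (fun ω => f i (βs i ⬝ᵥ x ω) * x ω m) P := hzx.comp hg1 hg2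
      exact hind.integral_fun_mul_eq_mul_integral (((hz j).mul (hz i)).aestronglyMeasurable)
        ((hg2.comp hx).aestronglyMeasurable)
    simp_rw [hterm]
    -- z j and z i are uncorrelated for i ≠ j
    have hzz : ∀ i : Fin k, i ≠ j → ∫ ω, z j ω * z i ω ∂P = 0 := by
      intro i hij
      have hind : IndepFun (z j) (z i) P := hiid.indepFun (Ne.symm hij)
      rw [hind.integral_fun_mul_eq_mul_integral (hz j).aestronglyMeasurable (hz i).aestronglyMeasurable,
        hzmean j, zero_mul]
    have hzz2 : ∫ ω, z j ω * z j ω ∂P = 1 := by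
      rw [← hzvar j]
      congr 1; ext ω; ring
    rw [Finset.sum_eq_single j
      (fun i _ hij => by rw [hzz i hij, zero_mul])
      (fun h => absurd (Finset.mem_univ j) h)]
    rw [hzz2, one_mul, hεterm, add_zero, hM m, mul_comm]
  -- put the vector together
  have hwv : (∫ ω, (z j ω * y ω) • x ω ∂P) = c • S.mulVec (βs j) := by
    funext m
    rw [hw m, hcomp m]
    simp [smul_eq_mul]
  rw [hwv, Matrix.mulVec_smul, Matrix.mulVec_mulVec,
    Matrix.nonsing_inv_mul S (isUnit_iff_ne_zero.mpr hS.det_pos.ne'), Matrix.one_mulVec,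
    smul_smul, inv_mul_cancel₀ hne, one_smul]
end
end

section
/- Let W ~ N(0,1), f(z) = 1/(1+e^{-z}), and define ℓ(z) = z · E[f'(Wz/20)] for z ≥ 0. Then ℓ(6) > 1.22. -/
open MeasureTheory ProbabilityTheory Real
open scoped ENNReal NNReal

private lemma sig_deriv (f : ℝ → ℝ) (hf : ∀ z, f z = (1 + Real.exp (-z))⁻¹) (u : ℝ) :
    deriv f u = Real.exp (-u) / (1 + Real.exp (-u))^2 := by
  have hfe : f = fun z => (1 + Real.exp (-z))⁻¹ := funext hf
  have h1 : HasDerivAt (fun z : ℝ => 1 + Real.exp (-z)) (-Real.exp (-u)) u := by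
    simpa using ((Real.hasDerivAt_exp (-u)).comp u (hasDerivAt_neg u)).const_add 1
  have hne : 1 + Real.exp (-u) ≠ 0 := by positivity
  have h2 := h1.inv hne
  rw [hfe, show (fun z => (1 + Real.exp (-z))⁻¹) = (fun z : ℝ => 1 + Real.exp (-z))⁻¹ from rfl, h2.deriv]
  field_simp

private lemma sig_lb (u : ℝ) :
    (1/4 : ℝ) * Real.exp (-u^2) ≤ Real.exp (-u) / (1 + Real.exp (-u))^2 := by
  have h1 : Real.cosh (u/2) ≤ Real.exp (u^2/2) :=
    (Real.cosh_le_exp_half_sq (u/2)).trans (Real.exp_le_exp.2 (by nlinarith [sq_nonneg u]))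
  have hc1 : (1:ℝ) ≤ Real.cosh (u/2) := Real.one_le_cosh _
  have h2 : Real.cosh (u/2)^2 ≤ Real.exp (u^2) := by
    have := mul_le_mul h1 h1 (by linarith) (Real.exp_pos _).le
    rwa [← Real.exp_add, ← sq, show u^2/2 + u^2/2 = u^2 by ring] at this
  have hkey : (1 + Real.exp (-u))^2 = 4 * Real.cosh (u/2)^2 * Real.exp (-u) := by
    rw [Real.cosh_eq]
    have hab : Real.exp (u/2) * Real.exp (-(u/2)) = 1 := by
      rw [← Real.exp_add]; simp
    have hb2 : Real.exp (-(u/2)) * Real.exp (-(u/2)) = Real.exp (-u) := by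
      rw [← Real.exp_add]; ring_nf
    nlinarith [hab, hb2]
  rw [le_div_iff₀ (by positivity), hkey]
  have h3 : Real.exp (-u^2) * Real.cosh (u/2)^2 ≤ 1 := by
    have := mul_le_mul_of_nonneg_left h2 (Real.exp_pos (-u^2)).le
    rwa [← Real.exp_add, show -u^2 + u^2 = 0 by ring, Real.exp_zero] at this
  nlinarith [Real.exp_pos (-u), h3]

private lemma sig_ub (u : ℝ) : Real.exp (-u) / (1 + Real.exp (-u))^2 ≤ 1/4 := by
  rw [div_le_iff₀ (by positivity)]
  nlinarith [sq_nonneg (1 - Real.exp (-u)), Real.exp_pos (-u)]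

private lemma gauss_int (g : ℝ → ℝ) :
    ∫ x, g x ∂(gaussianReal 0 1)
      = ∫ x, (Real.sqrt (2 * π))⁻¹ * Real.exp (-x^2 / 2) * g x := by
  rw [gaussianReal_of_var_ne_zero 0 one_ne_zero]
  have hmeas : Measurable fun x => (gaussianPDFReal 0 1 x).toNNReal :=
    (measurable_gaussianPDFReal 0 1).real_toNNReal
  have hpdf : (gaussianPDF 0 1) = fun x => ((gaussianPDFReal 0 1 x).toNNReal : ℝ≥0∞) := by
    funext x; rfl
  rw [hpdf, integral_withDensity_eq_integral_smul hmeas]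
  congr 1
  funext x
  rw [NNReal.smul_def, smul_eq_mul, Real.coe_toNNReal _ (gaussianPDFReal_nonneg 0 1 x)]
  simp [gaussianPDFReal]

/-- For the sigmoid `f` and `W ~ N(0,1)`, `ℓ(z) = z·E[f'(Wz/20)]` satisfies
`ℓ(6) > 1.22`. -/
theorem ell_six_gt (f : ℝ → ℝ)
    (hf : ∀ z, f z = (1 + Real.exp (-z))⁻¹) :
    (1.22 : ℝ) <
      6 * ∫ w, deriv f (w * 6 / 20) ∂(gaussianReal 0 1) := by
  have hrw : (fun w : ℝ => deriv f (w * 6 / 20))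
      = fun w : ℝ => Real.exp (-(w * 6 / 20)) / (1 + Real.exp (-(w * 6 / 20)))^2 :=
    funext fun w => sig_deriv f hf _
  -- integrability of both integrands
  have hcont1 : Continuous fun w : ℝ =>
      Real.exp (-(w * 6 / 20)) / (1 + Real.exp (-(w * 6 / 20)))^2 := by
    apply Continuous.div (by fun_prop) (by fun_prop)
    intro x; positivity
  have hInt1 : Integrable (fun w : ℝ =>
      Real.exp (-(w * 6 / 20)) / (1 + Real.exp (-(w * 6 / 20)))^2) (gaussianReal 0 1) := by
    refine (integrable_const (1/4 : ℝ)).mono' hcont1.aestronglyMeasurable ?_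
    filter_upwards with w
    rw [Real.norm_eq_abs, abs_of_nonneg (by positivity)]
    exact sig_ub _
  have hInt2 : Integrable (fun w : ℝ =>
      (1/4 : ℝ) * Real.exp (-(w * 6 / 20)^2)) (gaussianReal 0 1) := by
    have hc : Continuous fun w : ℝ => (1/4 : ℝ) * Real.exp (-(w * 6 / 20)^2) := by
      fun_prop
    refine (integrable_const (1/4 : ℝ)).mono' hc.aestronglyMeasurable ?_
    filter_upwards with w
    rw [Real.norm_eq_abs, abs_of_nonneg (by positivity)]
    nlinarith [Real.exp_le_one_iff.2 (neg_nonpos.2 (sq_nonneg (w * 6 / 20)))]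
  -- lower bound on the integral
  have hmono : ∫ w, (1/4 : ℝ) * Real.exp (-(w * 6 / 20)^2) ∂(gaussianReal 0 1)
      ≤ ∫ w, deriv f (w * 6 / 20) ∂(gaussianReal 0 1) := by
    rw [hrw]
    exact integral_mono hInt2 hInt1 fun w => sig_lb _
  -- compute the lower-bound integral
  have hval : ∫ w, (1/4 : ℝ) * Real.exp (-(w * 6 / 20)^2) ∂(gaussianReal 0 1)
      = (Real.sqrt (2 * π))⁻¹ * (1/4) * Real.sqrt (π / (59/100)) := by
    rw [gauss_int]
    have : (fun x : ℝ => (Real.sqrt (2 * π))⁻¹ * Real.exp (-x^2 / 2)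
          * ((1/4 : ℝ) * Real.exp (-(x * 6 / 20)^2)))
        = fun x : ℝ => ((Real.sqrt (2 * π))⁻¹ * (1/4))
          * Real.exp (-(59/100 : ℝ) * x^2) := by
      funext x
      rw [mul_assoc, mul_comm (Real.exp (-x^2/2)), mul_assoc, mul_assoc, ← Real.exp_add]
      ring_nf
    rw [this, integral_const_mul, integral_gaussian]
  have hnum : (1.22 : ℝ) < 6 * ((Real.sqrt (2 * π))⁻¹ * (1/4) * Real.sqrt (π / (59/100))) := by
    have hA : Real.sqrt (2 * π) ^ 2 = 2 * π := Real.sq_sqrt (by positivity)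
    have hB : Real.sqrt (π / (59/100)) ^ 2 = π / (59/100) := Real.sq_sqrt (by positivity)
    have hApos : 0 < Real.sqrt (2 * π) := Real.sqrt_pos.2 (by positivity)
    have hBpos : 0 < Real.sqrt (π / (59/100)) := Real.sqrt_pos.2 (by positivity)
    rw [show (6:ℝ) * ((Real.sqrt (2 * π))⁻¹ * (1/4) * Real.sqrt (π / (59/100)))
        = (3/2) * Real.sqrt (π / (59/100)) / Real.sqrt (2 * π) by field_simp; ring,
      lt_div_iff₀ hApos]
    nlinarith [pi_pos, mul_pos hApos hBpos]
  rw [hval] at hmono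
  linarith [hnum, mul_le_mul_of_nonneg_left hmono (by norm_num : (0:ℝ) ≤ 6)]
end

section
/- Let W ~ N(0,1), f(z) = 1/(1+e^{-z}), and ℓ(z) = z E[f'(Wz/20)]. Then for z ∈ [0, 6], the derivative satisfies ℓ'(z) = E[f'(Wz/20)] + (z/20)² E[f'''(Wz/20)] ≥ 0.19. -/
open MeasureTheory ProbabilityTheory

noncomputable section EllAux

open Real
open scoped NNReal

/-- The sigmoid function. -/
def sg (x : ℝ) : ℝ := (1 + Real.exp (-x))⁻¹

/-- First derivative of the sigmoid. -/
def dd1 (x : ℝ) : ℝ := sg x * (1 - sg x)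

/-- Second derivative of the sigmoid. -/
def dd2 (x : ℝ) : ℝ := dd1 x * (1 - 2 * sg x)

/-- Third derivative of the sigmoid. -/
def dd3 (x : ℝ) : ℝ := dd1 x * (1 - 6 * dd1 x)

lemma one_add_exp_pos (x : ℝ) : (0:ℝ) < 1 + Real.exp (-x) := by positivity

lemma sg_pos (x : ℝ) : 0 < sg x := by
  unfold sg; positivity

lemma sg_lt_one (x : ℝ) : sg x < 1 := by
  unfold sg
  rw [inv_lt_one_iff₀]
  right
  linarith [Real.exp_pos (-x)]

lemma hasDerivAt_sg (x : ℝ) : HasDerivAt sg (dd1 x) x := by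
  have h0 : (1 + Real.exp (-x)) ≠ 0 := (one_add_exp_pos x).ne'
  have h1 : HasDerivAt (fun y : ℝ => 1 + Real.exp (-y)) (Real.exp (-x) * -1) x := by
    have h := (Real.hasDerivAt_exp (-x)).comp x (hasDerivAt_neg x)
    exact h.const_add 1
  have h2 := h1.inv h0
  have heq : dd1 x = -(Real.exp (-x) * -1) / (1 + Real.exp (-x)) ^ 2 := by
    unfold dd1 sg
    field_simp
    ring
  rw [heq]
  exact h2

lemma hasDerivAt_dd1 (x : ℝ) : HasDerivAt dd1 (dd2 x) x := by
  have h := (hasDerivAt_sg x).mul ((hasDerivAt_sg x).const_sub 1)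
  have heq : dd2 x = dd1 x * (1 - sg x) + sg x * -dd1 x := by
    unfold dd2 dd1; ring
  rw [heq]
  exact h

lemma hasDerivAt_dd2 (x : ℝ) : HasDerivAt dd2 (dd3 x) x := by
  have h := (hasDerivAt_dd1 x).mul (((hasDerivAt_sg x).const_mul 2).const_sub 1)
  have heq : dd3 x = dd2 x * (1 - 2 * sg x) + dd1 x * -(2 * dd1 x) := by
    unfold dd3 dd2 dd1; ring
  rw [heq]
  exact h

lemma continuous_sg : Continuous sg :=
  continuous_iff_continuousAt.2 fun x => (hasDerivAt_sg x).continuousAt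

lemma continuous_dd1 : Continuous dd1 :=
  continuous_sg.mul (continuous_const.sub continuous_sg)

lemma continuous_dd2 : Continuous dd2 :=
  continuous_dd1.mul (continuous_const.sub (continuous_const.mul continuous_sg))

lemma continuous_dd3 : Continuous dd3 :=
  continuous_dd1.mul (continuous_const.sub (continuous_const.mul continuous_dd1))

lemma dd1_nonneg (x : ℝ) : 0 ≤ dd1 x := by
  have h1 := sg_pos x; have h2 := sg_lt_one x
  unfold dd1; nlinarith

lemma dd1_le (x : ℝ) : dd1 x ≤ 1/4 := by
  have h1 := sg_pos x; have h2 := sg_lt_one x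
  unfold dd1; nlinarith [sq_nonneg (2 * sg x - 1)]

lemma abs_dd1_le (x : ℝ) : |dd1 x| ≤ 1/4 := by
  rw [abs_of_nonneg (dd1_nonneg x)]; exact dd1_le x

lemma abs_dd2_le (x : ℝ) : |dd2 x| ≤ 1/4 := by
  have h1 := dd1_nonneg x; have h2 := dd1_le x
  have h3 := sg_pos x; have h4 := sg_lt_one x
  rw [abs_le]
  constructor <;> unfold dd2 <;> nlinarith

lemma abs_dd3_le (x : ℝ) : |dd3 x| ≤ 1/8 := by
  have h1 := dd1_nonneg x; have h2 := dd1_le x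
  rw [abs_le]
  constructor <;> unfold dd3 <;> nlinarith [sq_nonneg (12 * dd1 x - 1), mul_nonneg h1 (by linarith : (0:ℝ) ≤ 1/4 - dd1 x)]

lemma sg_zero : sg 0 = 1/2 := by
  unfold sg; norm_num

lemma dd1_lower (x : ℝ) : 1/4 - x^2/16 ≤ dd1 x := by
  have hdiff : Differentiable ℝ sg := fun y => (hasDerivAt_sg y).differentiableAt
  have hlip : LipschitzWith (4⁻¹ : ℝ≥0) sg := by
    apply lipschitzWith_of_nnnorm_deriv_le hdiff
    intro y
    rw [← NNReal.coe_le_coe, coe_nnnorm, (hasDerivAt_sg y).deriv, Real.norm_eq_abs]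
    calc |dd1 y| ≤ 1/4 := abs_dd1_le y
    _ = ((4⁻¹ : ℝ≥0) : ℝ) := by norm_num
  have hd := hlip.dist_le_mul x 0
  rw [Real.dist_eq, Real.dist_eq, sub_zero, sg_zero] at hd
  have habs : |sg x - 1/2| ≤ |x| / 4 := by
    calc |sg x - 1/2| ≤ ((4⁻¹ : ℝ≥0) : ℝ) * |x| := hd
    _ = |x| / 4 := by push_cast; ring
  have hsq : (sg x - 1/2)^2 ≤ x^2/16 := by
    have h1 : (sg x - 1/2)^2 = |sg x - 1/2|^2 := (sq_abs _).symm
    have h2 : |x|^2 = x^2 := sq_abs x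
    nlinarith [abs_nonneg (sg x - 1/2), abs_nonneg x]
  have : dd1 x = 1/4 - (sg x - 1/2)^2 := by unfold dd1; ring
  linarith

/-! ### Gaussian density facts -/

/-- Standard normal density. -/
def φg (x : ℝ) : ℝ := (Real.sqrt (2 * π))⁻¹ * Real.exp (-x^2/2)

lemma φg_nonneg (x : ℝ) : 0 ≤ φg x := by unfold φg; positivity

lemma φg_eq : gaussianPDFReal 0 1 = φg := by
  funext x
  simp only [gaussianPDFReal, φg, NNReal.coe_one, mul_one, sub_zero]

lemma continuous_φg : Continuous φg := by
  unfold φg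
  exact continuous_const.mul ((continuous_pow 2).neg.div_const 2).rexp

lemma hasDerivAt_φg (x : ℝ) : HasDerivAt φg (-x * φg x) x := by
  have h : HasDerivAt (fun y : ℝ => -y^2/2) (-x) x := by
    have h0 := ((hasDerivAt_pow 2 x).neg).div_const 2
    exact h0.congr_deriv (by norm_num; ring)
  have h1 := (h.exp).const_mul ((Real.sqrt (2 * π))⁻¹)
  exact h1.congr_deriv (by unfold φg; ring)

lemma integrable_φg : Integrable φg := φg_eq ▸ integrable_gaussianPDFReal 0 1

lemma integral_φg : ∫ x, φg x = 1 := φg_eq ▸ integral_gaussianPDFReal_eq_one 0 one_ne_zero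

lemma integrable_x_φg : Integrable (fun x => x * φg x) := by
  have h := (integrable_mul_exp_neg_mul_sq (by norm_num : (0:ℝ) < 1/2)).const_mul
      ((Real.sqrt (2 * π))⁻¹)
  apply h.congr
  filter_upwards with x
  unfold φg
  rw [show -(1/2 : ℝ) * x^2 = -x^2/2 by ring]
  ring

lemma integrable_xsq_φg : Integrable (fun x => x^2 * φg x) := by
  have h := (integrable_rpow_mul_exp_neg_mul_sq (by norm_num : (0:ℝ) < 1/2)
      (by norm_num : (-1:ℝ) < 2)).const_mul ((Real.sqrt (2 * π))⁻¹)
  apply h.congr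
  filter_upwards with x
  have hx2 : (x : ℝ) ^ ((2:ℝ)) = x ^ (2:ℕ) := by
    rw [show ((2:ℝ)) = ((2:ℕ):ℝ) by norm_num, Real.rpow_natCast]
  unfold φg
  rw [hx2, show -(1/2 : ℝ) * x^2 = -x^2/2 by ring]
  ring

lemma integrable_abs_φg : Integrable (fun x => |x| * φg x) := by
  apply integrable_x_φg.abs.congr
  filter_upwards with x
  rw [abs_mul, abs_of_nonneg (φg_nonneg x)]

/-- Transfer of integrals from the Gaussian measure to a weighted Lebesgue integral. -/
lemma gauss_integral_eq (g : ℝ → ℝ) :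
    ∫ w, g w ∂(gaussianReal 0 1) = ∫ w, g w * φg w := by
  have hmeas : Measurable (fun x => (φg x).toNNReal) :=
    continuous_φg.measurable.real_toNNReal
  have hpdf : gaussianPDF 0 1 = fun x => ((φg x).toNNReal : ENNReal) := by
    funext x
    rw [gaussianPDF, φg_eq, ENNReal.ofReal]
  rw [gaussianReal_of_var_ne_zero 0 one_ne_zero, hpdf,
    integral_withDensity_eq_integral_smul hmeas]
  congr 1
  funext x
  rw [NNReal.smul_def, Real.coe_toNNReal _ (φg_nonneg x), smul_eq_mul, mul_comm]

lemma gauss_integrable_iff (g : ℝ → ℝ) :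
    Integrable g (gaussianReal 0 1) ↔ Integrable (fun w => g w * φg w) := by
  have hmeas : Measurable (fun x => (φg x).toNNReal) :=
    continuous_φg.measurable.real_toNNReal
  have hpdf : gaussianPDF 0 1 = fun x => ((φg x).toNNReal : ENNReal) := by
    funext x
    rw [gaussianPDF, φg_eq, ENNReal.ofReal]
  rw [gaussianReal_of_var_ne_zero 0 one_ne_zero, hpdf,
    integrable_withDensity_iff_integrable_smul hmeas]
  apply integrable_congr
  filter_upwards with x
  rw [NNReal.smul_def, Real.coe_toNNReal _ (φg_nonneg x), smul_eq_mul, mul_comm]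

/-- Stein-type integration by parts with the standard normal weight. -/
lemma stein_volume {g g' : ℝ → ℝ} (hd : ∀ x, HasDerivAt g (g' x) x)
    (h1 : Integrable (fun x => g x * φg x))
    (h2 : Integrable (fun x => g' x * φg x))
    (h3 : Integrable (fun x => x * g x * φg x)) :
    ∫ x, x * g x * φg x = ∫ x, g' x * φg x := by
  have hF : ∀ x, HasDerivAt (fun y => g y * φg y) (g' x * φg x - x * g x * φg x) x := by
    intro x
    have h := (hd x).mul (hasDerivAt_φg x)
    exact h.congr_deriv (by ring)
  have h0 := integral_eq_zero_of_hasDerivAt_of_integrable hF (h2.sub h3) h1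
  rw [integral_sub h2 h3] at h0
  linarith

lemma integrable_bdd_mul_φg {g : ℝ → ℝ} (hm : AEStronglyMeasurable g volume)
    {C : ℝ} (hC : ∀ x, |g x| ≤ C) : Integrable (fun x => g x * φg x) := by
  apply (integrable_φg.const_mul C).mono' (hm.mul continuous_φg.aestronglyMeasurable)
  filter_upwards with x
  simp only [Pi.mul_apply, Real.norm_eq_abs, abs_mul, abs_of_nonneg (φg_nonneg x)]
  exact mul_le_mul_of_nonneg_right (hC x) (φg_nonneg x)

lemma integrable_x_bdd_mul_φg {g : ℝ → ℝ} (hm : AEStronglyMeasurable g volume)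
    {C : ℝ} (hC : ∀ x, |g x| ≤ C) : Integrable (fun x => x * g x * φg x) := by
  apply (integrable_abs_φg.const_mul C).mono'
    ((aestronglyMeasurable_id.mul hm).mul continuous_φg.aestronglyMeasurable)
  filter_upwards with x
  simp only [Pi.mul_apply, id_eq, Real.norm_eq_abs, abs_mul, abs_of_nonneg (φg_nonneg x)]
  have h0 : 0 ≤ |x| * φg x := mul_nonneg (abs_nonneg x) (φg_nonneg x)
  calc |x| * |g x| * φg x ≤ |x| * C * φg x := by
        apply mul_le_mul_of_nonneg_right _ (φg_nonneg x)
        exact mul_le_mul_of_nonneg_left (hC x) (abs_nonneg x)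
    _ = C * (|x| * φg x) := by ring

/-- Stein's lemma for the standard Gaussian, bounded version. -/
lemma stein_gauss {g g' : ℝ → ℝ} (hd : ∀ x, HasDerivAt g (g' x) x)
    (hg' : Continuous g') {C C' : ℝ} (hC : ∀ x, |g x| ≤ C) (hC' : ∀ x, |g' x| ≤ C') :
    ∫ x, x * g x ∂(gaussianReal 0 1) = ∫ x, g' x ∂(gaussianReal 0 1) := by
  have hgc : Continuous g := continuous_iff_continuousAt.2 fun x => (hd x).continuousAt
  rw [gauss_integral_eq, gauss_integral_eq]
  exact stein_volume hd (integrable_bdd_mul_φg hgc.aestronglyMeasurable hC)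
    (integrable_bdd_mul_φg hg'.aestronglyMeasurable hC')
    (integrable_x_bdd_mul_φg hgc.aestronglyMeasurable hC)

/-- Second moment of the standard Gaussian. -/
lemma gauss_second_moment : ∫ w, w^2 ∂(gaussianReal 0 1) = 1 := by
  rw [gauss_integral_eq]
  have hd : ∀ x : ℝ, HasDerivAt (fun y : ℝ => y) ((fun _ : ℝ => (1:ℝ)) x) x :=
    fun x => hasDerivAt_id x
  have h2 : Integrable (fun x => (1:ℝ) * φg x) := by
    simpa using integrable_φg
  have h3 : Integrable (fun x => x * x * φg x) := by
    apply integrable_xsq_φg.congr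
    filter_upwards with x
    ring_nf
  have h := stein_volume hd integrable_x_φg h2 h3
  have he : ∫ x, x^2 * φg x = ∫ x, x * x * φg x := by
    congr 1; funext x; ring_nf
  rw [he, h]
  simpa using integral_φg

lemma gauss_integrable_of_bdd {h : ℝ → ℝ} (hc : Continuous h) {C : ℝ}
    (hb : ∀ x, |h x| ≤ C) : Integrable h (gaussianReal 0 1) := by
  apply (integrable_const C).mono' hc.aestronglyMeasurable
  filter_upwards with x
  rw [Real.norm_eq_abs]
  exact hb x

lemma gauss_integrable_abs : Integrable (fun w => |w|) (gaussianReal 0 1) := by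
  rw [gauss_integrable_iff]
  exact integrable_abs_φg

lemma gauss_integrable_sq : Integrable (fun w => w^2) (gaussianReal 0 1) := by
  rw [gauss_integrable_iff]
  exact integrable_xsq_φg

end EllAux

/-- For the sigmoid `f`, `W ~ N(0,1)` and `ℓ(z) = z·E[f'(Wz/20)]`, on `[0,6]`
the derivative is `ℓ'(z) = E[f'(Wz/20)] + (z/20)² E[f'''(Wz/20)] ≥ 0.19`. -/
theorem ell_deriv_bound (f : ℝ → ℝ)
    (hf : ∀ z, f z = (1 + Real.exp (-z))⁻¹)
    (z : ℝ) (hz : z ∈ Set.Icc (0 : ℝ) 6) :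
    HasDerivAt (fun c => c * ∫ w, deriv f (w * c / 20) ∂(gaussianReal 0 1))
      ((∫ w, deriv f (w * z / 20) ∂(gaussianReal 0 1)) +
        (z / 20) ^ 2 *
          ∫ w, deriv (deriv (deriv f)) (w * z / 20) ∂(gaussianReal 0 1)) z ∧
    (0.19 : ℝ) ≤
      (∫ w, deriv f (w * z / 20) ∂(gaussianReal 0 1)) +
        (z / 20) ^ 2 *
          ∫ w, deriv (deriv (deriv f)) (w * z / 20) ∂(gaussianReal 0 1) := by
  obtain ⟨hz0, hz6⟩ := hz
  have hfs : f = sg := funext fun x => hf x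
  have hder1 : deriv f = dd1 := by
    funext x; rw [hfs]; exact (hasDerivAt_sg x).deriv
  have hder3 : deriv (deriv (deriv f)) = dd3 := by
    rw [hder1]
    have h2 : deriv dd1 = dd2 := funext fun x => (hasDerivAt_dd1 x).deriv
    rw [h2]
    exact funext fun x => (hasDerivAt_dd2 x).deriv
  rw [hder3, hder1]
  -- Step B : differentiate under the integral sign
  have hcont_inner : ∀ c : ℝ, Continuous (fun w : ℝ => w * c / 20) :=
    fun c => (continuous_id.mul continuous_const).div_const 20
  have key := hasDerivAt_integral_of_dominated_loc_of_deriv_le (μ := gaussianReal 0 1)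
      (F := fun c w => dd1 (w * c / 20)) (F' := fun c w => w / 20 * dd2 (w * c / 20))
      (x₀ := z) (bound := fun w => |w| / 80) (s := Set.univ) Filter.univ_mem
      (Filter.Eventually.of_forall fun c =>
        (continuous_dd1.comp (hcont_inner c)).aestronglyMeasurable)
      (gauss_integrable_of_bdd (continuous_dd1.comp (hcont_inner z)) fun w => abs_dd1_le _)
      (((continuous_id.div_const 20).mul
        (continuous_dd2.comp (hcont_inner z))).aestronglyMeasurable)
      (Filter.Eventually.of_forall fun w c _ => by
        rw [Real.norm_eq_abs, abs_mul, abs_div,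
          abs_of_nonneg (by norm_num : (0:ℝ) ≤ 20)]
        calc |w| / 20 * |dd2 (w * c / 20)| ≤ |w| / 20 * (1/4) :=
              mul_le_mul_of_nonneg_left (abs_dd2_le _) (by positivity)
          _ = |w| / 80 := by ring)
      (gauss_integrable_abs.div_const 80)
      (Filter.Eventually.of_forall fun w c _ => by
        have hin : HasDerivAt (fun c : ℝ => w * c / 20) (w / 20) c := by
          have h0 := ((hasDerivAt_id c).const_mul w).div_const 20
          simpa using h0
        have h := (hasDerivAt_dd1 (w * c / 20)).comp c hin
        exact h.congr_deriv (by ring))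
  obtain ⟨-, hG⟩ := key
  -- Step C : Stein's identity
  have hstein : ∫ w, w * dd2 (w * z / 20) ∂(gaussianReal 0 1)
      = ∫ w, (z / 20) * dd3 (w * z / 20) ∂(gaussianReal 0 1) := by
    apply stein_gauss (g' := fun w => (z / 20) * dd3 (w * z / 20))
      (C := 1/4) (C' := |z/20| * (1/8))
    · intro w
      have hin : HasDerivAt (fun w : ℝ => w * z / 20) (z / 20) w := by
        have h0 := ((hasDerivAt_id w).mul_const z).div_const 20
        simpa using h0
      have h := (hasDerivAt_dd2 (w * z / 20)).comp w hin
      exact h.congr_deriv (by ring)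
    · exact continuous_const.mul (continuous_dd3.comp (hcont_inner z))
    · exact fun w => abs_dd2_le _
    · intro w
      rw [abs_mul]
      exact mul_le_mul_of_nonneg_left (abs_dd3_le _) (abs_nonneg _)
  have hDval : (∫ w, w / 20 * dd2 (w * z / 20) ∂(gaussianReal 0 1))
      = (1/20) * ((z/20) * ∫ w, dd3 (w * z / 20) ∂(gaussianReal 0 1)) := by
    have e1 : (fun w : ℝ => w / 20 * dd2 (w * z / 20))
        = fun w => (1/20) * (w * dd2 (w * z / 20)) := funext fun w => by ring
    rw [e1, integral_const_mul, hstein, integral_const_mul]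
  constructor
  · have hmul := (hasDerivAt_id z).mul hG
    have heq : (1:ℝ) * (∫ w, dd1 (w * z / 20) ∂(gaussianReal 0 1)) +
        id z * (∫ w, w / 20 * dd2 (w * z / 20) ∂(gaussianReal 0 1))
        = (∫ w, dd1 (w * z / 20) ∂(gaussianReal 0 1)) +
          (z / 20) ^ 2 * ∫ w, dd3 (w * z / 20) ∂(gaussianReal 0 1) := by
      simp only [id_eq, hDval]
      ring
    rw [← heq]
    exact hmul
  · -- Step E : lower bound
    have hI3 : |∫ w, dd3 (w * z / 20) ∂(gaussianReal 0 1)| ≤ 1/8 := by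
      have h := norm_integral_le_of_norm_le (μ := gaussianReal 0 1)
        (f := fun w : ℝ => dd3 (w * z / 20)) (integrable_const (1/8 : ℝ))
        (Filter.Eventually.of_forall fun w => by
          rw [Real.norm_eq_abs]; exact abs_dd3_le _)
      rw [Real.norm_eq_abs] at h
      simpa using h
    have hmono : ∫ w, (1/4 - (z/20)^2/16 * w^2) ∂(gaussianReal 0 1)
        ≤ ∫ w, dd1 (w * z / 20) ∂(gaussianReal 0 1) := by
      apply integral_mono
      · exact (integrable_const (1/4 : ℝ)).sub (gauss_integrable_sq.const_mul _)
      · exact gauss_integrable_of_bdd (continuous_dd1.comp (hcont_inner z))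
          fun w => abs_dd1_le _
      · intro w
        have h := dd1_lower (w * z / 20)
        have he : (w * z / 20)^2/16 = (z/20)^2/16 * w^2 := by ring
        simp only [Pi.sub_apply]
        linarith [he ▸ h]
    have hval : ∫ w, (1/4 - (z/20)^2/16 * w^2) ∂(gaussianReal 0 1)
        = 1/4 - (z/20)^2/16 := by
      rw [integral_sub (integrable_const _) (gauss_integrable_sq.const_mul _),
        integral_const_mul, gauss_second_moment]
      simp
    have hk : (z/20)^2 ≤ 9/100 := by nlinarith
    have hk0 : (0:ℝ) ≤ (z/20)^2 := sq_nonneg _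
    have habs := abs_le.mp hI3
    nlinarith [habs.1, habs.2, hmono, hval ▸ hmono]
end
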